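/- Let G = (A;E) be C²_ω, the countably infinite graph that is a disjoint union of ω edges (a perfect matching). Let h : A³ → A be an operation such that (i) N(h(a),h(b)) whenever N(a[i],b[i]) for some i, and (ii) whenever (a[i],b[i]) ∈ E ∪ = for all i, E(h(a),h(b)) iff the number of coordinates with E(a[i],b[i]) is odd. Let f : A^k → A be a quasi near-unanimity operation preserving E, N and uuE. Then no quaternary relation R ⊆ A⁴ that is preserved by both h and f and is invariant under all automorphisms of G satisfies: R efficiently entails (E(x₁,x₂) → x₃ = x₄) and entails (uuE(x₁,x₂) ∧ N(x₂,x₃) ∧ uuE(x₃,x₄)); and no such R satisfies: R efficiently entails ((x₁ = x₂) → E(x₃,x₄)) and entails (uuE(x₁,x₂) ∧ N(x₂,x₃) ∧ uuE(x₃,x₄)). -/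

import Mathlib

universe u

variable {A : Type u}

/-- Non-adjacency relation `N` of a graph with edge relation `E`. -/
def NRel (E : A → A → Prop) (a b : A) : Prop := a ≠ b ∧ ¬ E a b

/-- `uu O` denotes `O ∪ =`. -/
def uu (O : A → A → Prop) (a b : A) : Prop := O a b ∨ a = b

/-- `E` is the edge relation of a simple graph: symmetric and irreflexive. -/
def IsSimpleGraph (E : A → A → Prop) : Prop :=
  (∀ a b, E a b → E b a) ∧ (∀ a, ¬ E a a)

/-- An `n`-ary operation preserves an `m`-ary relation. -/
def Preserves {n m : ℕ} (f : (Fin n → A) → A) (R : Set (Fin m → A)) : Prop :=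
  ∀ t : Fin n → (Fin m → A), (∀ i, t i ∈ R) → (fun j => f (fun i => t i j)) ∈ R

/-- An `n`-ary operation preserves a binary relation `S`. -/
def PreservesRel {n : ℕ} (f : (Fin n → A) → A) (S : A → A → Prop) : Prop :=
  ∀ u v : Fin n → A, (∀ i, S (u i) (v i)) → S (f u) (f v)

/-- A binary (curried) operation preserves an `m`-ary relation. -/
def Preserves2 {m : ℕ} (f : A → A → A) (R : Set (Fin m → A)) : Prop :=
  ∀ t₁ t₂, t₁ ∈ R → t₂ ∈ R → (fun j => f (t₁ j) (t₂ j)) ∈ R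

/-- A ternary (curried) operation preserves an `m`-ary relation. -/
def Preserves3 {m : ℕ} (f : A → A → A → A) (R : Set (Fin m → A)) : Prop :=
  ∀ t₁ t₂ t₃, t₁ ∈ R → t₂ ∈ R → t₃ ∈ R → (fun j => f (t₁ j) (t₂ j) (t₃ j)) ∈ R

/-- `t` is an `OP`-tuple: `(t[1],t[2]) ∈ O` and `(t[3],t[4]) ∈ P`. -/
def IsOP (O P : A → A → Prop) (t : Fin 4 → A) : Prop := O (t 0) (t 1) ∧ P (t 2) (t 3)

/-- A quaternary relation entails a formula `ψ(x₁,x₂,x₃,x₄)`. -/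
def Entails (R : Set (Fin 4 → A)) (ψ : A → A → A → A → Prop) : Prop :=
  ∀ t ∈ R, ψ (t 0) (t 1) (t 2) (t 3)

/-- `R` efficiently entails `S₁(x₁,x₂) → S₂(x₃,x₄)`. -/
def EffEntails (R : Set (Fin 4 → A)) (S₁ S₂ : A → A → Prop) : Prop :=
  (∀ t ∈ R, S₁ (t 0) (t 1) → S₂ (t 2) (t 3)) ∧
  (∃ t ∈ R, S₁ (t 0) (t 1) ∧ S₂ (t 2) (t 3)) ∧
  (∃ t ∈ R, ¬ S₁ (t 0) (t 1) ∧ ¬ S₂ (t 2) (t 3))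

/-- `f` is a quasi near-unanimity operation. -/
def IsQnu {k : ℕ} (f : (Fin k → A) → A) : Prop :=
  ∀ x y : A, ∀ j : Fin k, f (Function.update (fun _ => x) j y) = f (fun _ => x)

/-- `α` is an automorphism of the graph `(A;E)`. -/
def IsGraphAuto (E : A → A → Prop) (α : A ≃ A) : Prop := ∀ a b, E (α a) (α b) ↔ E a b

/-- `R` is invariant under all automorphisms of `(A;E)`. -/
def AutoInvariant {m : ℕ} (E : A → A → Prop) (R : Set (Fin m → A)) : Prop :=
  ∀ α : A ≃ A, IsGraphAuto E α → ∀ t ∈ R, (fun i => α (t i)) ∈ R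

/-- The extension property of the random graph. -/
def ExtensionProperty (E : A → A → Prop) : Prop :=
  ∀ U U' : Finset A, Disjoint U U' →
    ∃ v : A, (∀ u ∈ U, E v u) ∧ (∀ u ∈ U', ¬ E v u)

/-- A binary operation is injective. -/
def BinInj (f : A → A → A) : Prop := Function.Injective (fun p : A × A => f p.1 p.2)

/-- A ternary operation is injective. -/
def TernInj (f : A → A → A → A) : Prop :=
  Function.Injective (fun p : A × A × A => f p.1 p.2.1 p.2.2)

/-- A binary injection is balanced. -/
def BalancedBin (E : A → A → Prop) (f : A → A → A) : Prop :=
  ∀ a₁ a₂ b₁ b₂ : A,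
    (((E a₁ b₁ ∧ a₂ = b₂) ∨ (a₁ = b₁ ∧ E a₂ b₂)) → E (f a₁ a₂) (f b₁ b₂)) ∧
    (((NRel E a₁ b₁ ∧ a₂ = b₂) ∨ (a₁ = b₁ ∧ NRel E a₂ b₂)) → NRel E (f a₁ a₂) (f b₁ b₂))

/-- A binary operation is `E`-dominated. -/
def EDominated (E : A → A → Prop) (f : A → A → A) : Prop :=
  ∀ a₁ a₂ b₁ b₂ : A, ((a₁ = b₁ ∧ a₂ ≠ b₂) ∨ (a₁ ≠ b₁ ∧ a₂ = b₂)) → E (f a₁ a₂) (f b₁ b₂)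

/-- A binary operation is `N`-dominated. -/
def NDominated (E : A → A → Prop) (f : A → A → A) : Prop :=
  ∀ a₁ a₂ b₁ b₂ : A, ((a₁ = b₁ ∧ a₂ ≠ b₂) ∨ (a₁ ≠ b₁ ∧ a₂ = b₂)) → NRel E (f a₁ a₂) (f b₁ b₂)

/-- A binary operation is of behaviour min. -/
def BehMin (E : A → A → Prop) (f : A → A → A) : Prop :=
  ∀ a₁ a₂ b₁ b₂ : A, a₁ ≠ b₁ → a₂ ≠ b₂ →
    (E (f a₁ a₂) (f b₁ b₂) ↔ (E a₁ b₁ ∧ E a₂ b₂))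

/-- A binary operation is of behaviour max. -/
def BehMax (E : A → A → Prop) (f : A → A → A) : Prop :=
  ∀ a₁ a₂ b₁ b₂ : A, a₁ ≠ b₁ → a₂ ≠ b₂ →
    (NRel E (f a₁ a₂) (f b₁ b₂) ↔ (NRel E a₁ b₁ ∧ NRel E a₂ b₂))

/-- A binary operation is of behaviour projection. -/
def BehProj (E : A → A → Prop) (f : A → A → A) : Prop :=
  (∀ a₁ a₂ b₁ b₂ : A, a₁ ≠ b₁ → a₂ ≠ b₂ → (E (f a₁ a₂) (f b₁ b₂) ↔ E a₁ b₁)) ∨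
  (∀ a₁ a₂ b₁ b₂ : A, a₁ ≠ b₁ → a₂ ≠ b₂ → (E (f a₁ a₂) (f b₁ b₂) ↔ E a₂ b₂))

/-- A binary operation is of behaviour xor. -/
def BehXor (E : A → A → Prop) (f : A → A → A) : Prop :=
  ∀ a₁ a₂ b₁ b₂ : A, a₁ ≠ b₁ → a₂ ≠ b₂ →
    (E (f a₁ a₂) (f b₁ b₂) ↔ Xor' (E a₁ b₁) (E a₂ b₂))

/-- A binary operation is of behaviour xnor. -/
def BehXnor (E : A → A → Prop) (f : A → A → A) : Prop :=
  ∀ a₁ a₂ b₁ b₂ : A, a₁ ≠ b₁ → a₂ ≠ b₂ →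
    (E (f a₁ a₂) (f b₁ b₂) ↔ (E a₁ b₁ ↔ E a₂ b₂))

/-- A binary operation is `E`-constant: its image induces a clique. -/
def EConstantBin (E : A → A → Prop) (f : A → A → A) : Prop :=
  ∀ a₁ a₂ b₁ b₂ : A, f a₁ a₂ ≠ f b₁ b₂ → E (f a₁ a₂) (f b₁ b₂)

/-- A binary operation is `N`-constant: its image induces an independent set. -/
def NConstantBin (E : A → A → Prop) (f : A → A → A) : Prop :=
  ∀ a₁ a₂ b₁ b₂ : A, f a₁ a₂ ≠ f b₁ b₂ → NRel E (f a₁ a₂) (f b₁ b₂)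

/-- A ternary operation is of behaviour majority. -/
def BehMajority (E : A → A → Prop) (f : A → A → A → A) : Prop :=
  ∀ a₁ a₂ a₃ b₁ b₂ b₃ : A, a₁ ≠ b₁ → a₂ ≠ b₂ → a₃ ≠ b₃ →
    (E (f a₁ a₂ a₃) (f b₁ b₂ b₃) ↔
      ((E a₁ b₁ ∧ E a₂ b₂) ∨ (E a₁ b₁ ∧ E a₃ b₃) ∨ (E a₂ b₂ ∧ E a₃ b₃)))

/-- A ternary operation is of behaviour minority. -/
def BehMinority (E : A → A → Prop) (f : A → A → A → A) : Prop :=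
  ∀ a₁ a₂ a₃ b₁ b₂ b₃ : A, a₁ ≠ b₁ → a₂ ≠ b₂ → a₃ ≠ b₃ →
    (NRel E (f a₁ a₂ a₃) (f b₁ b₂ b₃) ↔
      ((NRel E a₁ b₁ ∧ NRel E a₂ b₂ ∧ NRel E a₃ b₃) ∨
       (E a₁ b₁ ∧ E a₂ b₂ ∧ NRel E a₃ b₃) ∨
       (E a₁ b₁ ∧ NRel E a₂ b₂ ∧ E a₃ b₃) ∨
       (NRel E a₁ b₁ ∧ E a₂ b₂ ∧ E a₃ b₃)))

/-- A ternary operation hyperplanely has the binary behaviour `P`. -/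
def Hyperplanely (P : (A → A → A) → Prop) (f : A → A → A → A) : Prop :=
  ∀ c : A, P (fun x y => f x y c) ∧ P (fun x y => f x c y) ∧ P (fun x y => f c x y)

/-- `n_E(u,s)`: the number of coordinates at which `u` and `s` are `E`-related. -/
noncomputable def nECount {k : ℕ} (E : A → A → Prop) (u s : Fin k → A) : ℕ :=
  {i : Fin k | E (u i) (s i)}.ncard

/-- A constant tuple. -/
def IsConstTuple {k : ℕ} (u : Fin k → A) : Prop := ∃ c, ∀ i, u i = c

/-- `h` maps any argument containing an `N`-pair to an `N`-pair and behaves like a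
minority on `{E,=}`. -/
def HMinority (E : A → A → Prop) (h : A → A → A → A) : Prop :=
  (∀ a₁ a₂ a₃ b₁ b₂ b₃ : A,
    (NRel E a₁ b₁ ∨ NRel E a₂ b₂ ∨ NRel E a₃ b₃) →
      NRel E (h a₁ a₂ a₃) (h b₁ b₂ b₃)) ∧
  (∀ a₁ a₂ a₃ b₁ b₂ b₃ : A,
    uu E a₁ b₁ → uu E a₂ b₂ → uu E a₃ b₃ →
      (E (h a₁ a₂ a₃) (h b₁ b₂ b₃) ↔
        ((E a₁ b₁ ∧ E a₂ b₂ ∧ E a₃ b₃) ∨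
         (E a₁ b₁ ∧ ¬ E a₂ b₂ ∧ ¬ E a₃ b₃) ∨
         (¬ E a₁ b₁ ∧ E a₂ b₂ ∧ ¬ E a₃ b₃) ∨
         (¬ E a₁ b₁ ∧ ¬ E a₂ b₂ ∧ E a₃ b₃))))

/-- The vertex set of `C²_ω`, the disjoint union of ω edges. -/
abbrev Vtx : Type := ℕ × Bool

/-- The edge relation of `C²_ω`: `(n,b)` is adjacent to `(m,c)` iff `n = m` and `b ≠ c`. -/
def Ematch (a b : Vtx) : Prop := a.1 = b.1 ∧ a.2 ≠ b.2


namespace Stmt8Aux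

def mateV (v : Vtx) : Vtx := (v.1, !v.2)

lemma mate_fst (v : Vtx) : (mateV v).1 = v.1 := rfl

lemma mate_snd (v : Vtx) : (mateV v).2 = !v.2 := rfl

lemma mate_ne (v : Vtx) : mateV v ≠ v := by
  intro hEq
  have h2 : (mateV v).2 = v.2 := by rw [hEq]
  simp [mateV] at h2

lemma e_mate (v : Vtx) : Ematch v (mateV v) := ⟨rfl, by simp [mateV]⟩

lemma e_irrefl (v : Vtx) : ¬ Ematch v v := fun hE => hE.2 rfl

lemma e_ne {u v : Vtx} (hE : Ematch u v) : u ≠ v := fun hEq => hE.2 (by rw [hEq])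

lemma pair_eq : ∀ {n : ℕ} {x : Vtx}, x.1 = n → (n, x.2) = x := by
  rintro n ⟨x1, x2⟩ rfl; rfl

lemma eq_mate {u v : Vtx} (hE : Ematch u v) : v = mateV u := by
  obtain ⟨h1, h2⟩ := hE
  have h2' : v.2 = !u.2 := by
    cases hu : u.2 <;> cases hv : v.2 <;> simp_all
  exact Prod.ext h1.symm h2'

lemma n_fst {u v : Vtx} (hN : NRel Ematch u v) : u.1 ≠ v.1 := by
  intro h1
  by_cases h2 : u.2 = v.2
  · exact hN.1 (Prod.ext h1 h2)
  · exact hN.2 ⟨h1, h2⟩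

lemma xor_rot1 : ∀ a b : Bool, xor (xor a b) a = b := by decide
lemma xor_rot2 : ∀ a b : Bool, xor (xor a b) (!a) = !b := by decide
lemma xor_cancel : ∀ g x : Bool, xor g (xor g x) = x := by decide
lemma xor_inj : ∀ g x y : Bool, xor g x = xor g y → x = y := by decide

def permAuto (σ : ℕ ≃ ℕ) (g : ℕ → Bool) : Vtx ≃ Vtx where
  toFun v := (σ v.1, xor (g v.1) v.2)
  invFun v := (σ.symm v.1, xor (g (σ.symm v.1)) v.2)
  left_inv v := by cases v with | mk n x => simp [xor_cancel]
  right_inv v := by cases v with | mk n x => simp [xor_cancel]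

lemma permAuto_apply (σ : ℕ ≃ ℕ) (g : ℕ → Bool) (v : Vtx) :
    permAuto σ g v = (σ v.1, xor (g v.1) v.2) := rfl

lemma permAuto_auto (σ : ℕ ≃ ℕ) (g : ℕ → Bool) : IsGraphAuto Ematch (permAuto σ g) := by
  intro u v
  show (σ u.1 = σ v.1 ∧ xor (g u.1) u.2 ≠ xor (g v.1) v.2) ↔ (u.1 = v.1 ∧ u.2 ≠ v.2)
  constructor
  · rintro ⟨h1, h2⟩
    have hfst : u.1 = v.1 := σ.injective h1
    exact ⟨hfst, fun hx => h2 (by rw [hfst, hx])⟩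
  · rintro ⟨h1, h2⟩
    exact ⟨by rw [h1], fun hx => h2 (xor_inj _ _ _ (by rwa [h1] at hx))⟩

lemma exists_perm (n₁ n₂ n₁' n₂' : ℕ) (h : n₁ ≠ n₂) (h' : n₁' ≠ n₂') :
    ∃ σ : ℕ ≃ ℕ, σ n₁ = n₁' ∧ σ n₂ = n₂' := by
  refine ⟨(Equiv.swap n₁ n₁').trans (Equiv.swap (Equiv.swap n₁ n₁' n₂) n₂'), ?_, ?_⟩
  · have h1 : Equiv.swap n₁ n₁' n₁ = n₁' := Equiv.swap_apply_left _ _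
    have hne1 : n₁' ≠ Equiv.swap n₁ n₁' n₂ := by
      exact fun e => h ((Equiv.swap n₁ n₁').injective (h1.trans e))
    simp only [Equiv.trans_apply, h1]
    exact Equiv.swap_apply_of_ne_of_ne hne1 h'
  · simp only [Equiv.trans_apply]
    exact Equiv.swap_apply_left _ _

lemma exists_flip {α : Type*} (g : ℕ → α) : ∀ k : ℕ, g 0 ≠ g k → ∃ m, m < k ∧ g m ≠ g (m + 1) := by
  intro k
  induction k with
  | zero => intro hne; exact absurd rfl hne
  | succ n ih =>
    intro hne
    by_cases hn : g n = g (n + 1)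
    · obtain ⟨m, hm, hflip⟩ := ih (fun e => hne (e.trans hn))
      exact ⟨m, Nat.lt_succ_of_lt hm, hflip⟩
    · exact ⟨n, Nat.lt_succ_self n, hn⟩

def patV {k : ℕ} (c : Vtx) (χ : Fin k → Bool) : Fin k → Vtx :=
  fun i => if χ i then mateV c else c

lemma patV_fst {k : ℕ} (c : Vtx) (χ : Fin k → Bool) (i : Fin k) : (patV c χ i).1 = c.1 := by
  unfold patV; split <;> rfl

lemma patV_true {k : ℕ} (c : Vtx) : patV (k := k) c (fun _ => true) = fun _ => mateV c := by
  funext i; simp [patV]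

lemma patV_single {k : ℕ} (c : Vtx) (j : Fin k) :
    patV c (fun i => decide (i = j)) = Function.update (fun _ => c) j (mateV c) := by
  funext i
  by_cases hij : i = j
  · subst hij; simp [patV]
  · simp [patV, hij, Function.update_of_ne hij]

lemma main {k : ℕ}
    (f : (Fin k → Vtx) → Vtx) (hqnu : IsQnu f) (hfE : PreservesRel f Ematch)
    (R : Set (Fin 4 → Vtx)) (hRf : Preserves f R) (hinv : AutoInvariant Ematch R)
    (hent : Entails R (fun x₁ x₂ x₃ x₄ =>
      uu Ematch x₁ x₂ ∧ NRel Ematch x₂ x₃ ∧ uu Ematch x₃ x₄))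
    (a b : Fin 4 → Vtx) (ha : a ∈ R) (hb : b ∈ R)
    (ha01 : Ematch (a 0) (a 1)) (ha23 : a 2 = a 3)
    (hb01 : b 0 = b 1) (hb23 : Ematch (b 2) (b 3)) :
    ∃ s ∈ R, Ematch (s 0) (s 1) ∧ Ematch (s 2) (s 3) := by
  have hpq : (a 0).1 ≠ (a 2).1 := by
    obtain ⟨-, hN, -⟩ := hent a ha
    rw [ha01.1]
    exact n_fst hN
  have hbq : (b 0).1 ≠ (b 2).1 := by
    obtain ⟨-, hN, -⟩ := hent b hb
    rw [hb01]
    exact n_fst hN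
  have ha1 : a 1 = mateV (a 0) := eq_mate ha01
  have hb3 : b 3 = mateV (b 2) := eq_mate hb23
  -- all flipped copies of `a`
  have memA : ∀ x y : Vtx, x.1 = (a 0).1 → y.1 = (a 2).1 →
      (![x, mateV x, y, y] : Fin 4 → Vtx) ∈ R := by
    intro x y hx hy
    set g : ℕ → Bool := fun n =>
      if n = (a 0).1 then xor (a 0).2 x.2 else
      if n = (a 2).1 then xor (a 2).2 y.2 else false with hg
    have hga : g (a 0).1 = xor (a 0).2 x.2 := by simp [hg]
    have hgq : g (a 2).1 = xor (a 2).2 y.2 := by simp [hg, Ne.symm hpq]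
    have hmem := hinv (permAuto (Equiv.refl ℕ) g) (permAuto_auto _ _) a ha
    have heq : (![x, mateV x, y, y] : Fin 4 → Vtx) = fun i => permAuto (Equiv.refl ℕ) g (a i) := by
      funext i
      fin_cases i
      · show x = permAuto (Equiv.refl ℕ) g (a 0)
        rw [permAuto_apply, hga, xor_rot1, Equiv.refl_apply]
        exact (pair_eq hx).symm
      · show mateV x = permAuto (Equiv.refl ℕ) g (a 1)
        rw [ha1, permAuto_apply, mate_fst, mate_snd, hga, xor_rot2, Equiv.refl_apply]
        exact (pair_eq ((mate_fst x).trans hx)).symm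
      · show y = permAuto (Equiv.refl ℕ) g (a 2)
        rw [permAuto_apply, hgq, xor_rot1, Equiv.refl_apply]
        exact (pair_eq hy).symm
      · show y = permAuto (Equiv.refl ℕ) g (a 3)
        rw [← ha23, permAuto_apply, hgq, xor_rot1, Equiv.refl_apply]
        exact (pair_eq hy).symm
    rw [heq]
    exact hmem
  -- all flipped copies of `b`
  have memC : ∀ x y : Vtx, x.1 = (a 0).1 → y.1 = (a 2).1 →
      (![x, x, y, mateV y] : Fin 4 → Vtx) ∈ R := by
    intro x y hx hy
    obtain ⟨σ, hσ1, hσ2⟩ := exists_perm (b 0).1 (b 2).1 (a 0).1 (a 2).1 hbq hpq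
    set g : ℕ → Bool := fun n =>
      if n = (b 0).1 then xor (b 0).2 x.2 else
      if n = (b 2).1 then xor (b 2).2 y.2 else false with hg
    have hgb : g (b 0).1 = xor (b 0).2 x.2 := by simp [hg]
    have hgq : g (b 2).1 = xor (b 2).2 y.2 := by simp [hg, Ne.symm hbq]
    have hmem := hinv (permAuto σ g) (permAuto_auto _ _) b hb
    have heq : (![x, x, y, mateV y] : Fin 4 → Vtx) = fun i => permAuto σ g (b i) := by
      funext i
      fin_cases i
      · show x = permAuto σ g (b 0)
        rw [permAuto_apply, hgb, hσ1, xor_rot1]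
        exact (pair_eq hx).symm
      · show x = permAuto σ g (b 1)
        rw [← hb01, permAuto_apply, hgb, hσ1, xor_rot1]
        exact (pair_eq hx).symm
      · show y = permAuto σ g (b 2)
        rw [permAuto_apply, hgq, hσ2, xor_rot1]
        exact (pair_eq hy).symm
      · show mateV y = permAuto σ g (b 3)
        rw [hb3]
        show mateV y = (σ (b 2).1, xor (g (b 2).1) (!(b 2).2))
        rw [hgq, hσ2, xor_rot2]
        exact (pair_eq ((mate_fst y).trans hy)).symm
    rw [heq]
    exact hmem
  -- basic images of constant tuples
  have he1 : Ematch (f (fun _ => a 0)) (f (fun _ => mateV (a 0))) :=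
    hfE _ _ (fun _ => e_mate (a 0))
  have he2 : Ematch (f (fun _ => a 2)) (f (fun _ => mateV (a 2))) :=
    hfE _ _ (fun _ => e_mate (a 2))
  -- find a flipping coordinate
  obtain ⟨m, hmk, hflip⟩ :=
    exists_flip (fun m => f (patV (a 0) (fun i => decide (i.val < m)))) k (by
      have h0 : patV (a 0) (fun i : Fin k => decide (i.val < 0)) = fun _ => a 0 := by
        funext i; simp [patV]
      have hk : patV (a 0) (fun i : Fin k => decide (i.val < k)) = fun _ => mateV (a 0) := by
        funext i; simp [patV, i.isLt]
      simp only [h0, hk]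
      exact e_ne he1)
  set j : Fin k := ⟨m, hmk⟩ with hjdef
  set P0 : Fin k → Vtx := patV (a 0) (fun i => decide (i.val < m)) with hP0def
  set P1 : Fin k → Vtx := patV (a 0) (fun i => decide (i.val < m + 1)) with hP1def
  have hP01 : f P0 ≠ f P1 := hflip
  have hP0fst : ∀ i, (P0 i).1 = (a 0).1 := fun i => patV_fst _ _ _
  have hP1j : P1 j = mateV (P0 j) := by
    have h1 : P0 j = a 0 := by simp [hP0def, patV, hjdef]
    have h2 : P1 j = mateV (a 0) := by simp [hP1def, patV, hjdef]
    rw [h1, h2]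
  have hP1o : ∀ i, i ≠ j → P1 i = P0 i := by
    intro i hij
    have hne : i.val ≠ m := by
      intro hv; exact hij (Fin.ext (by simpa [hjdef] using hv))
    have hd : decide (i.val < m + 1) = decide (i.val < m) := by
      apply decide_eq_decide.mpr
      constructor
      · intro hlt; exact lt_of_le_of_ne (Nat.lt_succ_iff.mp hlt) hne
      · intro hlt; exact Nat.lt_succ_of_lt hlt
    simp only [hP0def, hP1def, patV, hd]
  -- the second pattern pair
  have he2ne : f (fun _ => a 2) ≠ f (fun _ => mateV (a 2)) := e_ne he2
  obtain ⟨P2, P3, hP23, hP2fst, hP3j, hP3o⟩ :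
      ∃ P2 P3 : Fin k → Vtx, f P2 ≠ f P3 ∧ (∀ i, (P2 i).1 = (a 2).1) ∧
        P3 j = P2 j ∧ (∀ i, i ≠ j → P3 i = mateV (P2 i)) := by
    by_cases hv : f (patV (a 2) (fun i => decide (¬ i = j))) = f (fun _ => a 2)
    · refine ⟨patV (a 2) (fun i => decide (i = j)), patV (a 2) (fun _ => true), ?_,
        fun i => patV_fst _ _ _, ?_, ?_⟩
      · rw [patV_single, hqnu (a 2) (mateV (a 2)) j, patV_true]
        exact he2ne
      · simp [patV]
      · intro i hij; simp [patV, hij]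
    · refine ⟨fun _ => a 2, patV (a 2) (fun i => decide (¬ i = j)), fun hEq => hv hEq.symm,
        fun i => rfl, ?_, ?_⟩
      · simp [patV]
      · intro i hij; simp [patV, hij]
  -- build the mixture
  set t : Fin k → Fin 4 → Vtx := fun i =>
    if i = j then ![P0 i, mateV (P0 i), P2 i, P2 i]
    else ![P0 i, P0 i, P2 i, mateV (P2 i)] with htdef
  have htR : ∀ i, t i ∈ R := by
    intro i
    by_cases hij : i = j
    · simp only [htdef, if_pos hij]
      exact memA (P0 i) (P2 i) (hP0fst i) (hP2fst i)
    · simp only [htdef, if_neg hij]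
      exact memC (P0 i) (P2 i) (hP0fst i) (hP2fst i)
  have hsR := hRf t htR
  have hs0 : (fun i => t i 0) = P0 := by
    funext i
    by_cases hij : i = j <;> simp [htdef, hij]
  have hs1 : (fun i => t i 1) = P1 := by
    funext i
    by_cases hij : i = j
    · subst hij; simp [htdef, hP1j]
    · simp [htdef, hij, hP1o i hij]
  have hs2 : (fun i => t i 2) = P2 := by
    funext i
    by_cases hij : i = j <;> simp [htdef, hij]
  have hs3 : (fun i => t i 3) = P3 := by
    funext i
    by_cases hij : i = j
    · subst hij; simp [htdef, hP3j]
    · simp [htdef, hij, hP3o i hij]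
  obtain ⟨h01, -, h23⟩ := hent _ hsR
  refine ⟨_, hsR, ?_, ?_⟩
  · refine h01.resolve_right ?_
    show ¬ f (fun i => t i 0) = f (fun i => t i 1)
    rw [hs0, hs1]
    exact hP01
  · refine h23.resolve_right ?_
    show ¬ f (fun i => t i 2) = f (fun i => t i 3)
    rw [hs2, hs3]
    exact hP23

end Stmt8Aux

open Stmt8Aux

theorem stmt8 {k : ℕ} (h : Vtx → Vtx → Vtx → Vtx) (hh : HMinority Ematch h)
    (f : (Fin k → Vtx) → Vtx) (hqnu : IsQnu f)
    (hfE : PreservesRel f Ematch) (hfN : PreservesRel f (NRel Ematch))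
    (hfuuE : PreservesRel f (uu Ematch))
    (R : Set (Fin 4 → Vtx)) (hRh : Preserves3 h R) (hRf : Preserves f R)
    (hinv : AutoInvariant Ematch R) :
    (¬ (EffEntails R Ematch (fun a b => a = b) ∧
        Entails R (fun x₁ x₂ x₃ x₄ =>
          uu Ematch x₁ x₂ ∧ NRel Ematch x₂ x₃ ∧ uu Ematch x₃ x₄))) ∧
    (¬ (EffEntails R (fun a b => a = b) Ematch ∧
        Entails R (fun x₁ x₂ x₃ x₄ =>
          uu Ematch x₁ x₂ ∧ NRel Ematch x₂ x₃ ∧ uu Ematch x₃ x₄))) := by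
  constructor
  · rintro ⟨⟨himp, ⟨t1, ht1R, ht1a, ht1b⟩, ⟨t2, ht2R, ht2a, ht2b⟩⟩, hent⟩
    obtain ⟨hu1, -, hu2⟩ := hent t2 ht2R
    have h2eq : t2 0 = t2 1 := hu1.resolve_left ht2a
    have h2E : Ematch (t2 2) (t2 3) := hu2.resolve_right ht2b
    obtain ⟨s, hsR, hsE1, hsE2⟩ :=
      Stmt8Aux.main f hqnu hfE R hRf hinv hent t1 t2 ht1R ht2R ht1a ht1b h2eq h2E
    exact absurd (himp s hsR hsE1) (e_ne hsE2)
  · rintro ⟨⟨himp, ⟨t1, ht1R, ht1a, ht1b⟩, ⟨t2, ht2R, ht2a, ht2b⟩⟩, hent⟩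
    obtain ⟨hu1, -, hu2⟩ := hent t2 ht2R
    have h2E : Ematch (t2 0) (t2 1) := hu1.resolve_right ht2a
    have h2eq : t2 2 = t2 3 := hu2.resolve_left ht2b
    obtain ⟨s, hsR, hsE1, hsE2⟩ :=
      Stmt8Aux.main f hqnu hfE R hRf hinv hent t2 t1 ht2R ht1R h2E h2eq ht1a ht1b
    have hzR := hRh s t2 t1 hsR ht2R ht1R
    have hz01 : ¬ Ematch (h (s 0) (t2 0) (t1 0)) (h (s 1) (t2 1) (t1 1)) := by
      rw [hh.2 (s 0) (t2 0) (t1 0) (s 1) (t2 1) (t1 1)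
        (Or.inl hsE1) (Or.inl h2E) (Or.inr ht1a)]
      rintro (⟨-, -, hE⟩ | ⟨-, hnE, -⟩ | ⟨hnE, -, -⟩ | ⟨hnE, -, -⟩)
      · exact e_irrefl _ (ht1a ▸ hE)
      · exact hnE h2E
      · exact hnE hsE1
      · exact hnE hsE1
    have hz23 : ¬ Ematch (h (s 2) (t2 2) (t1 2)) (h (s 3) (t2 3) (t1 3)) := by
      rw [hh.2 (s 2) (t2 2) (t1 2) (s 3) (t2 3) (t1 3)
        (Or.inl hsE2) (Or.inr h2eq) (Or.inl ht1b)]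
      rintro (⟨-, hE, -⟩ | ⟨-, -, hnE⟩ | ⟨-, hE, -⟩ | ⟨hnE, -, -⟩)
      · exact e_irrefl _ (h2eq ▸ hE)
      · exact hnE ht1b
      · exact e_irrefl _ (h2eq ▸ hE)
      · exact hnE hsE2
    obtain ⟨hz1, -, -⟩ := hent _ hzR
    have hzeq : h (s 0) (t2 0) (t1 0) = h (s 1) (t2 1) (t1 1) := hz1.resolve_left hz01
    exact hz23 (himp _ hzR hzeq)
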